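/- Let α and α' be natural numbers with α > α' > 1, and set k = 2α − 1 and k' = 2α' − 1. Then for every real p ∈ [0,1], |δ^{k,α}(p)| ≥ |δ^{k',α'}(p)|. The same inequality holds in the even case, i.e., for k = 2(α−1) and k' = 2(α'−1): |δ^{k,α}(p)| ≥ |δ^{k',α'}(p)| for all p ∈ [0,1]. -/
import Mathlib


/-- The expected relative progress of one Slush round with sample size `k`,
majority threshold `α`, at fraction `p` of parties holding opinion 1. -/
noncomputable def slushDelta (k α : ℕ) (p : ℝ) : ℝ :=
  ∑ ℓ ∈ Finset.Icc α k,
    (k.choose ℓ : ℝ) * (p ^ ℓ * (1 - p) ^ (k - ℓ + 1) - (1 - p) ^ ℓ * p ^ (k - ℓ + 1))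

/-- for `α > α' > 1`, with `k = 2α − 1`, `k' = 2α' − 1` (odd case) and
`k = 2(α−1)`, `k' = 2(α'−1)` (even case), `|δ^{k,α}(p)| ≥ |δ^{k',α'}(p)|` on `[0,1]`. -/
noncomputable def slushU (k α : ℕ) (x : ℝ) : ℝ :=
  ∑ ℓ ∈ Finset.Icc α k, (k.choose ℓ : ℝ) * x ^ ℓ * (1 - x) ^ (k - ℓ)

lemma slushU_empty (k α : ℕ) (h : k < α) (x : ℝ) : slushU k α x = 0 := by
  unfold slushU
  rw [Finset.Icc_eq_empty (by omega)]
  simp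

lemma slushU_peel (k α : ℕ) (h : α ≤ k) (x : ℝ) :
    slushU k α x = (k.choose α : ℝ) * x ^ α * (1 - x) ^ (k - α) + slushU k (α + 1) x := by
  unfold slushU
  have hins : Finset.Icc α k = insert α (Finset.Icc (α + 1) k) := by
    ext m; simp; omega
  rw [hins, Finset.sum_insert (by simp)]

lemma slushU_succ (k α : ℕ) (hα : 1 ≤ α) (x : ℝ) :
    slushU (k + 1) α x
      = slushU k α x + (k.choose (α - 1) : ℝ) * x ^ α * (1 - x) ^ (k + 1 - α) := by
  obtain ⟨β, rfl⟩ : ∃ β, α = β + 1 := ⟨α - 1, by omega⟩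
  by_cases hk : β ≤ k
  · have hsplit : ∀ ℓ ∈ Finset.Icc (β + 1) (k + 1),
        ((k + 1).choose ℓ : ℝ) * x ^ ℓ * (1 - x) ^ (k + 1 - ℓ)
          = (k.choose ℓ : ℝ) * x ^ ℓ * (1 - x) ^ (k + 1 - ℓ)
            + (k.choose (ℓ - 1) : ℝ) * x ^ ℓ * (1 - x) ^ (k + 1 - ℓ) := by
      intro ℓ hℓ
      simp only [Finset.mem_Icc] at hℓ
      obtain ⟨m, rfl⟩ : ∃ m, ℓ = m + 1 := ⟨ℓ - 1, by omega⟩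
      rw [Nat.choose_succ_succ' k m]
      push_cast
      ring
    unfold slushU
    rw [Finset.sum_congr rfl hsplit, Finset.sum_add_distrib]
    have hA : ∑ ℓ ∈ Finset.Icc (β + 1) (k + 1),
        (k.choose ℓ : ℝ) * x ^ ℓ * (1 - x) ^ (k + 1 - ℓ)
          = (1 - x) * ∑ ℓ ∈ Finset.Icc (β + 1) k, (k.choose ℓ : ℝ) * x ^ ℓ * (1 - x) ^ (k - ℓ) := by
      rw [Finset.sum_Icc_succ_top (by omega), Nat.choose_succ_self, Finset.mul_sum]
      simp only [Nat.cast_zero, zero_mul, add_zero]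
      refine Finset.sum_congr rfl fun ℓ hℓ => ?_
      simp only [Finset.mem_Icc] at hℓ
      rw [show k + 1 - ℓ = (k - ℓ) + 1 by omega]
      ring
    have hB : ∑ ℓ ∈ Finset.Icc (β + 1) (k + 1),
        (k.choose (ℓ - 1) : ℝ) * x ^ ℓ * (1 - x) ^ (k + 1 - ℓ)
          = x * ∑ m ∈ Finset.Icc β k, (k.choose m : ℝ) * x ^ m * (1 - x) ^ (k - m) := by
      rw [show Finset.Icc (β + 1) (k + 1) = (Finset.Icc β k).map (addRightEmbedding 1) from by
        rw [Finset.map_add_right_Icc]]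
      rw [Finset.sum_map, Finset.mul_sum]
      refine Finset.sum_congr rfl fun m hm => ?_
      simp only [Finset.mem_Icc] at hm
      simp only [addRightEmbedding_apply, Nat.add_sub_cancel]
      rw [show k + 1 - (m + 1) = k - m by omega]
      ring
    rw [hA, hB]
    have hpeel := slushU_peel k β hk x
    unfold slushU at hpeel
    rw [hpeel]
    rw [show k + 1 - (β + 1) = k - β by omega, Nat.add_sub_cancel]
    ring
  · rw [slushU_empty (k+1) (β+1) (by omega) x, slushU_empty k (β+1) (by omega) x,
      Nat.add_sub_cancel, Nat.choose_eq_zero_of_lt (by omega)]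
    simp

noncomputable def slushS (α : ℕ) (p : ℝ) : ℝ :=
  ∑ j ∈ Finset.Icc 1 (α - 1), ((2 * j - 1).choose j : ℝ) * (p * (1 - p)) ^ j


lemma slushU_succ_succ (k α : ℕ) (x : ℝ) :
    slushU (k + 1) (α + 1) x
      = slushU k α x - (k.choose α : ℝ) * x ^ α * (1 - x) ^ (k + 1 - α) := by
  by_cases h : α ≤ k
  · have h1 := slushU_succ k (α + 1) (by omega) x
    rw [Nat.add_sub_cancel, show k + 1 - (α + 1) = k - α by omega] at h1
    have h2 := slushU_peel k α h x
    rw [h1, h2, show k + 1 - α = (k - α) + 1 by omega]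
    ring
  · rw [slushU_empty (k + 1) (α + 1) (by omega) x, slushU_empty k α (by omega) x,
      Nat.choose_eq_zero_of_lt (by omega)]
    simp

lemma slushDelta_eq (k α : ℕ) (p : ℝ) :
    slushDelta k α p = (1 - p) * slushU k α p - p * slushU k α (1 - p) := by
  unfold slushDelta slushU
  rw [Finset.mul_sum, Finset.mul_sum, ← Finset.sum_sub_distrib]
  refine Finset.sum_congr rfl fun ℓ hℓ => ?_
  rw [show (1 : ℝ) - (1 - p) = p by ring]
  ring

lemma slush_formula (α : ℕ) (hα : 1 ≤ α) (p : ℝ) :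
    slushDelta (2 * α - 1) α p = (2 * p - 1) * slushS α p ∧
    slushDelta (2 * (α - 1)) α p = (2 * p - 1) * slushS α p := by
  induction α, hα using Nat.le_induction with
  | base =>
    constructor
    · show slushDelta 1 1 p = _
      simp [slushDelta, slushS]
      ring
    · show slushDelta 0 1 p = _
      simp [slushDelta, slushS]
  | succ α hα ih =>
    obtain ⟨ih1, ih2⟩ := ih
    obtain ⟨β, rfl⟩ : ∃ β, α = β + 1 := ⟨α - 1, by omega⟩
    have hcsym : ((2 * β + 1).choose β : ℝ) = ((2 * β + 1).choose (β + 1) : ℝ) := by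
      norm_cast
      rw [← Nat.choose_symm (by omega : β + 1 ≤ 2 * β + 1),
        show 2 * β + 1 - (β + 1) = β by omega]
    have hc2 : (((2 * β + 2)).choose (β + 1) : ℝ) = 2 * ((2 * β + 1).choose (β + 1) : ℝ) := by
      have h1 : (2 * β + 2).choose (β + 1) = (2 * β + 1).choose β + (2 * β + 1).choose (β + 1) :=
        Nat.choose_succ_succ (2 * β + 1) β
      rw [h1]
      push_cast
      rw [hcsym]
      ring
    have hS : slushS (β + 1 + 1) p
        = slushS (β + 1) p + ((2 * β + 1).choose (β + 1) : ℝ) * (p ^ (β + 1) * (1 - p) ^ (β + 1)) := by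
      unfold slushS
      rw [show β + 1 + 1 - 1 = β + 1 by omega,
        Finset.sum_Icc_succ_top (by omega : 1 ≤ β + 1), show β + 1 - 1 = β by omega,
        show 2 * (β + 1) - 1 = 2 * β + 1 by omega, mul_pow]
    -- odd case
    have u_odd : ∀ x : ℝ, slushU (2 * β + 2 + 1) (β + 1 + 1) x
        = slushU (2 * β + 1) (β + 1) x
          + ((2 * β + 1).choose (β + 1) : ℝ) * x ^ (β + 1) * (1 - x) ^ (β + 1)
          - 2 * ((2 * β + 1).choose (β + 1) : ℝ) * x ^ (β + 1) * (1 - x) ^ (β + 2) := by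
      intro x
      have e2 := slushU_succ_succ (2 * β + 2) (β + 1) x
      rw [show 2 * β + 2 + 1 - (β + 1) = β + 2 by omega, hc2] at e2
      have e1 := slushU_succ (2 * β + 1) (β + 1) (by omega) x
      rw [Nat.add_sub_cancel, show 2 * β + 1 + 1 - (β + 1) = β + 1 by omega, hcsym] at e1
      rw [e2, show 2 * β + 2 = 2 * β + 1 + 1 by omega, e1]
    have odd : slushDelta (2 * (β + 1 + 1) - 1) (β + 1 + 1) p
        = (2 * p - 1) * slushS (β + 1 + 1) p := by
      rw [show 2 * (β + 1 + 1) - 1 = 2 * β + 2 + 1 by omega, slushDelta_eq,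
        u_odd p, u_odd (1 - p), show (1 : ℝ) - (1 - p) = p by ring, hS]
      rw [show 2 * (β + 1) - 1 = 2 * β + 1 by omega, slushDelta_eq] at ih1
      linear_combination ih1
    -- even case
    have u_even : ∀ x : ℝ, slushU (2 * β + 1 + 1) (β + 1 + 1) x
        = slushU (2 * β) (β + 1) x
          - ((2 * β).choose (β + 1) : ℝ) * x ^ (β + 1) * (1 - x) ^ β
          + ((2 * β + 1).choose (β + 1) : ℝ) * x ^ (β + 1 + 1) * (1 - x) ^ β := by
      intro x
      have e1 := slushU_succ_succ (2 * β) (β + 1) x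
      rw [show 2 * β + 1 - (β + 1) = β by omega] at e1
      have e2 := slushU_succ (2 * β + 1) (β + 1 + 1) (by omega) x
      rw [Nat.add_sub_cancel, show 2 * β + 1 + 1 - (β + 1 + 1) = β by omega] at e2
      rw [e2, e1]
    have even : slushDelta (2 * (β + 1 + 1 - 1)) (β + 1 + 1) p
        = (2 * p - 1) * slushS (β + 1 + 1) p := by
      rw [show 2 * (β + 1 + 1 - 1) = 2 * β + 1 + 1 by omega, slushDelta_eq,
        u_even p, u_even (1 - p), show (1 : ℝ) - (1 - p) = p by ring, hS]
      rw [show 2 * (β + 1 - 1) = 2 * β by omega, slushDelta_eq] at ih2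
      linear_combination ih2
    exact ⟨odd, even⟩

theorem slushDelta_domination_two (α α' : ℕ) (hα' : 1 < α') (hαα' : α' < α) :
    (∀ p : ℝ, 0 ≤ p → p ≤ 1 →
      |slushDelta (2 * α' - 1) α' p| ≤ |slushDelta (2 * α - 1) α p|)
    ∧ (∀ p : ℝ, 0 ≤ p → p ≤ 1 →
      |slushDelta (2 * (α' - 1)) α' p| ≤ |slushDelta (2 * (α - 1)) α p|) := by
  have key : ∀ p : ℝ, 0 ≤ p → p ≤ 1 →
      |(2 * p - 1) * slushS α' p| ≤ |(2 * p - 1) * slushS α p| := by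
    intro p hp hp1
    have hterm : ∀ j : ℕ, 0 ≤ ((2 * j - 1).choose j : ℝ) * (p * (1 - p)) ^ j := fun j =>
      mul_nonneg (Nat.cast_nonneg _) (pow_nonneg (mul_nonneg hp (by linarith)) j)
    have hnn : ∀ b : ℕ, 0 ≤ slushS b p := fun b =>
      Finset.sum_nonneg fun j _ => hterm j
    have hmono : slushS α' p ≤ slushS α p :=
      Finset.sum_le_sum_of_subset_of_nonneg
        (Finset.Icc_subset_Icc_right (by omega)) fun j _ _ => hterm j
    rw [abs_mul, abs_mul, abs_of_nonneg (hnn α'), abs_of_nonneg (hnn α)]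
    exact mul_le_mul_of_nonneg_left hmono (abs_nonneg _)
  constructor <;> intro p hp hp1
  · rw [(slush_formula α' (by omega) p).1, (slush_formula α (by omega) p).1]
    exact key p hp hp1
  · rw [(slush_formula α' (by omega) p).2, (slush_formula α (by omega) p).2]
    exact key p hp hp1
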